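/- For every n ∈ ℤ with n ≠ 0, one has c(2nπi) ≠ 1, and the 3×3 complex matrix M(0,2nπ) with rows (c(2nπi)−1, s(2nπi)/(2nπi), d(2nπi)/(2nπi)²), (2nπi·d(2nπi), c(2nπi)−1, s(2nπi)/(2nπi)), ((2nπi)²·s(2nπi), 2nπi·d(2nπi), c(2nπi)−1) has rank exactly 2. -/

import Mathlib

open Complex

/-- ω = exp(2πi/3), a primitive cube root of unity. -/
noncomputable def ω : ℂ := Complex.exp (2 * Real.pi * Complex.I / 3)

/-- c(z) = (1/3)·∑_{k=1}^{3} exp(ω^k z). -/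
noncomputable def cf (z : ℂ) : ℂ :=
  (1/3) * (Complex.exp (ω ^ 1 * z) + Complex.exp (ω ^ 2 * z) + Complex.exp (ω ^ 3 * z))

/-- s(z) = (1/3)·∑_{k=1}^{3} ω^{-k} exp(ω^k z). -/
noncomputable def sf (z : ℂ) : ℂ :=
  (1/3) * ((ω ^ 1)⁻¹ * Complex.exp (ω ^ 1 * z) + (ω ^ 2)⁻¹ * Complex.exp (ω ^ 2 * z) +
    (ω ^ 3)⁻¹ * Complex.exp (ω ^ 3 * z))

/-- d(z) = (1/3)·∑_{k=1}^{3} ω^k exp(ω^k z). -/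
noncomputable def df (z : ℂ) : ℂ :=
  (1/3) * (ω ^ 1 * Complex.exp (ω ^ 1 * z) + ω ^ 2 * Complex.exp (ω ^ 2 * z) +
    ω ^ 3 * Complex.exp (ω ^ 3 * z))

/-- The boundary-condition matrix M(0,λ) of the periodic problem for i·y‴ = λ³·y. -/
noncomputable def M₀ (lam : ℂ) : Matrix (Fin 3) (Fin 3) ℂ :=
  !![cf (Complex.I * lam) - 1, sf (Complex.I * lam) / (Complex.I * lam),
       df (Complex.I * lam) / (Complex.I * lam) ^ 2;
     Complex.I * lam * df (Complex.I * lam), cf (Complex.I * lam) - 1,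
       sf (Complex.I * lam) / (Complex.I * lam);
     (Complex.I * lam) ^ 2 * sf (Complex.I * lam), Complex.I * lam * df (Complex.I * lam),
       cf (Complex.I * lam) - 1]

lemma hω3 : ω ^ 3 = 1 := by
  rw [ω, ← Complex.exp_nat_mul]
  rw [show ((3:ℕ):ℂ) * (2 * Real.pi * Complex.I / 3) = 2 * Real.pi * Complex.I by push_cast; ring]
  exact Complex.exp_two_pi_mul_I

lemma hωim : ω.im = Real.sin (2 * Real.pi / 3) := by
  rw [ω, Complex.exp_im]
  have h1 : (2 * (Real.pi:ℂ) * Complex.I / 3).re = 0 := by simp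
  have h2 : (2 * (Real.pi:ℂ) * Complex.I / 3).im = 2 * Real.pi / 3 := by
    simp [Complex.div_im, Complex.mul_im]
  rw [h1, h2, Real.exp_zero, one_mul]

lemma hωim_pos : 0 < ω.im := by
  rw [hωim]
  apply Real.sin_pos_of_pos_of_lt_pi
  · positivity
  · nlinarith [Real.pi_pos]

lemma hω1 : ω ≠ 1 := by
  intro h
  have := hωim_pos
  rw [h] at this
  simp at this

lemma hωsum : ω ^ 2 + ω + 1 = 0 := by
  have h1 : (ω - 1) * (ω ^ 2 + ω + 1) = 0 := by linear_combination hω3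
  rcases mul_eq_zero.mp h1 with h2 | h2
  · exact absurd (sub_eq_zero.mp h2) hω1
  · exact h2

lemma hω0 : ω ≠ 0 := by
  intro h
  have := hω3
  rw [h] at this
  norm_num at this

/-- for n ≠ 0, c(2nπi) ≠ 1 and M(0,2nπ) has rank exactly 2. -/
theorem stmt_14 (n : ℤ) (hn : n ≠ 0) :
    cf (2 * n * Real.pi * Complex.I) ≠ 1 ∧
    (M₀ (2 * n * Real.pi : ℂ)).rank = 2 := by
  classical
  obtain ⟨z, hzdef⟩ : ∃ z : ℂ, z = 2 * (n : ℂ) * Real.pi * Complex.I := ⟨_, rfl⟩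
  have hz : Complex.exp z = 1 := by
    rw [show z = (n : ℂ) * (2 * Real.pi * Complex.I) by rw [hzdef]; ring]
    exact Complex.exp_int_mul_two_pi_mul_I n
  obtain ⟨a, hadef⟩ : ∃ a : ℂ, a = Complex.exp (ω * z) := ⟨_, rfl⟩
  obtain ⟨b, hbdef⟩ : ∃ b : ℂ, b = Complex.exp (ω ^ 2 * z) := ⟨_, rfl⟩
  -- a ≠ 1
  have hzre : z.re = 0 := by rw [hzdef]; simp
  have hzim : z.im = 2 * n * Real.pi := by rw [hzdef]; simp
  have hwzre : (ω * z).re = -(ω.im * (2 * n * Real.pi)) := by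
    rw [Complex.mul_re, hzre, hzim]; ring
  have hre_ne : (ω * z).re ≠ 0 := by
    rw [hwzre]
    have h1 : (n : ℝ) ≠ 0 := Int.cast_ne_zero.mpr hn
    have h2 : ω.im ≠ 0 := ne_of_gt hωim_pos
    have h3 : Real.pi ≠ 0 := Real.pi_ne_zero
    intro h
    apply h2
    have := neg_eq_zero.mp h
    rcases mul_eq_zero.mp this with h4 | h4
    · exact h4
    · exfalso
      rcases mul_eq_zero.mp h4 with h5 | h5
      · rcases mul_eq_zero.mp h5 with h6 | h6
        · norm_num at h6
        · exact h1 h6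
      · exact h3 h5
  have ha1 : a ≠ 1 := by
    intro h
    have h2 := congrArg Norm.norm h
    rw [hadef, Complex.norm_exp, norm_one, Real.exp_eq_one_iff] at h2
    exact hre_ne h2
  have ha0 : a ≠ 0 := by rw [hadef]; exact Complex.exp_ne_zero _
  have hab : a * b = 1 := by
    rw [hadef, hbdef, ← Complex.exp_add,
      show ω * z + ω ^ 2 * z = -z by linear_combination z * hωsum,
      Complex.exp_neg, hz]
    norm_num
  have hb1 : b ≠ 1 := by
    intro h
    rw [h, mul_one] at hab
    exact ha1 hab
  -- values of cf, sf, df at z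
  have hinv1 : ω⁻¹ = ω ^ 2 := inv_eq_of_mul_eq_one_right (by linear_combination hω3)
  have hinv2 : (ω ^ 2)⁻¹ = ω := inv_eq_of_mul_eq_one_right (by linear_combination hω3)
  have hc : cf z = (a + b + 1) / 3 := by
    rw [cf, pow_one, hω3]; simp only [one_mul]; rw [hz, ← hadef, ← hbdef]; ring
  have hs : sf z = (ω ^ 2 * a + ω * b + 1) / 3 := by
    rw [sf, pow_one, hω3]; simp only [one_mul, inv_one]
    rw [hinv1, hinv2, hz, ← hadef, ← hbdef]; ring
  have hd : df z = (ω * a + ω ^ 2 * b + 1) / 3 := by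
    rw [df, pow_one, hω3]; simp only [one_mul]; rw [hz, ← hadef, ← hbdef]; ring
  -- Part 1
  have part1 : cf z ≠ 1 := by
    intro h
    rw [hc] at h
    have h2 : a + b = 2 := by linear_combination 3 * h
    have h3 : (a - 1) ^ 2 = 0 := by linear_combination a * h2 - hab
    exact ha1 (sub_eq_zero.mp (pow_eq_zero_iff (n := 2) (by norm_num) |>.mp h3))
  refine ⟨hzdef ▸ part1, ?_⟩
  -- Part 2
  have hz0 : z ≠ 0 := by
    intro h
    apply ha1
    rw [hadef, h, mul_zero, Complex.exp_zero]
  have hIl : Complex.I * (2 * (n : ℂ) * Real.pi) = z := by rw [hzdef]; ring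
  -- key scalar identities
  have hE0 : cf z - 1 + sf z + df z = 0 := by
    rw [hc, hs, hd]; linear_combination ((a + b) / 3) * hωsum
  have hE1 : cf z - 1 + sf z * ω + df z * ω ^ 2 = a - 1 := by
    rw [hc, hs, hd]
    linear_combination (2 * a / 3 + b * ω / 3) * hω3 + ((b + 1) / 3) * hωsum
  have hE2 : cf z - 1 + sf z * ω ^ 2 + df z * ω = b - 1 := by
    rw [hc, hs, hd]
    linear_combination (2 * b / 3 + a * ω / 3) * hω3 + ((a + 1) / 3) * hωsum
  -- matrices
  set C : Matrix (Fin 3) (Fin 3) ℂ :=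
    !![cf z - 1, sf z, df z; df z, cf z - 1, sf z; sf z, df z, cf z - 1] with hCdef
  set V : Matrix (Fin 3) (Fin 3) ℂ := !![1,1,1; 1,ω,ω^2; 1,ω^2,ω] with hVdef
  set D : Matrix (Fin 3) (Fin 3) ℂ := !![(1:ℂ),0,0; 0,z,0; 0,0,z^2] with hDdef
  set Di : Matrix (Fin 3) (Fin 3) ℂ := !![(1:ℂ),0,0; 0,z⁻¹,0; 0,0,(z^2)⁻¹] with hDidef
  set Δ : Matrix (Fin 3) (Fin 3) ℂ := Matrix.diagonal ![0, a - 1, b - 1] with hΔdef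
  have hM : M₀ (2 * (n : ℂ) * Real.pi) = D * C * Di := by
    simp only [M₀, hIl]
    ext i j
    fin_cases i <;> fin_cases j <;>
      simp [hCdef, hDdef, hDidef, Matrix.mul_apply, Fin.sum_univ_three, Matrix.vecHead,
        Matrix.vecTail] <;>
      field_simp <;> ring
  have hDiD : Di * D = 1 := by
    ext i j
    fin_cases i <;> fin_cases j <;>
      simp [hDdef, hDidef, Matrix.mul_apply, Fin.sum_univ_three, Matrix.one_apply,
        Matrix.vecHead, Matrix.vecTail,
        inv_mul_cancel₀ hz0, inv_mul_cancel₀ (pow_ne_zero 2 hz0)]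
  have hCV : C * V = V * Δ := by
    ext i j
    fin_cases i <;> fin_cases j <;>
      simp only [hCdef, hVdef, hΔdef, Matrix.mul_apply, Fin.sum_univ_three,
        Matrix.cons_val', Matrix.cons_val_zero, Matrix.cons_val_one, Matrix.head_cons,
        Matrix.empty_val', Matrix.cons_val_fin_one, Matrix.head_fin_const,
        Matrix.of_apply, Matrix.vecHead, Matrix.vecTail, Matrix.diagonal_apply,
        Fin.isValue, Matrix.cons_val_two, Matrix.tail_cons]
    · simp [Matrix.vecHead, Matrix.vecTail]; linear_combination hE0
    · simp [Matrix.vecHead, Matrix.vecTail]; linear_combination hE1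
    · simp [Matrix.vecHead, Matrix.vecTail]; linear_combination hE2
    · simp [Matrix.vecHead, Matrix.vecTail]; linear_combination hE0
    · simp [Matrix.vecHead, Matrix.vecTail]; linear_combination ω * hE1 - df z * hω3
    · simp [Matrix.vecHead, Matrix.vecTail]; linear_combination ω ^ 2 * hE2 - (df z + sf z * ω) * hω3
    · simp [Matrix.vecHead, Matrix.vecTail]; linear_combination hE0
    · simp [Matrix.vecHead, Matrix.vecTail]; linear_combination ω ^ 2 * hE1 - (sf z + df z * ω) * hω3
    · simp [Matrix.vecHead, Matrix.vecTail]; linear_combination ω * hE2 - sf z * hω3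
  have hdetDV : IsUnit (D * V).det := by
    rw [Matrix.det_mul]
    have hdV : V.det = 3 * (ω ^ 2 - ω) := by
      rw [hVdef, Matrix.det_fin_three]
      simp [Matrix.vecHead, Matrix.vecTail]
      linear_combination (-ω) * hω3
    have hdD : D.det = z ^ 3 := by
      rw [hDdef, Matrix.det_fin_three]
      simp [Matrix.vecHead, Matrix.vecTail]
      ring
    rw [hdV, hdD, isUnit_iff_ne_zero]
    apply mul_ne_zero (pow_ne_zero 3 hz0)
    apply mul_ne_zero (by norm_num)
    intro h
    apply hω1
    have h2 : ω * ω = ω * 1 := by linear_combination h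
    exact mul_left_cancel₀ hω0 h2
  have key : M₀ (2 * (n : ℂ) * Real.pi) * (D * V) = (D * V) * Δ := by
    rw [hM, Matrix.mul_assoc (D * C) Di (D * V), ← Matrix.mul_assoc Di D V, hDiD,
      Matrix.one_mul, Matrix.mul_assoc D C V, hCV, ← Matrix.mul_assoc]
  have hrank : (M₀ (2 * (n : ℂ) * Real.pi)).rank = Δ.rank := by
    rw [← Matrix.rank_mul_eq_left_of_isUnit_det (D * V) (M₀ (2 * (n : ℂ) * Real.pi)) hdetDV,
      key, Matrix.rank_mul_eq_right_of_isUnit_det (D * V) Δ hdetDV]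
  rw [hrank, hΔdef, Matrix.rank_diagonal, Fintype.card_subtype]
  have hfilter : (Finset.univ.filter fun i => ![(0:ℂ), a - 1, b - 1] i ≠ 0) = {1, 2} := by
    ext i
    fin_cases i <;> simp [sub_ne_zero.mpr ha1, sub_ne_zero.mpr hb1]
  rw [hfilter]
  rfl
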